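/- Let P = B ⋊ ℚ be as above (B the boundedly supported functions ℚ → ℚ with translation action). Although B and ℚ are both uniquely k-divisible for every k ≥ 1, the group P is not uniquely 2-divisible. Hence an extension of uniquely 2-divisible groups need not be uniquely 2-divisible. -/

import Mathlib

/-- The abelian group of boundedly supported functions `ℚ → ℚ`. -/
def BddSupp : AddSubgroup (ℚ → ℚ) where
  carrier := {f | ∃ b : ℚ, ∀ x : ℚ, b < |x| → f x = 0}
  zero_mem' := ⟨0, fun _ _ => rfl⟩
  add_mem' := by
    rintro f g ⟨b1, h1⟩ ⟨b2, h2⟩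
    exact ⟨max b1 b2, fun x hx => by
      simp [h1 x (lt_of_le_of_lt (le_max_left _ _) hx),
        h2 x (lt_of_le_of_lt (le_max_right _ _) hx)]⟩
  neg_mem' := by
    rintro f ⟨b, h⟩
    exact ⟨b, fun x hx => by simp [h x hx]⟩

/-- Translation preserves bounded support. -/
theorem shiftMem (r : ℚ) (f : ℚ → ℚ) (hf : f ∈ BddSupp) :
    (fun x : ℚ => f (x + r)) ∈ BddSupp := by
  obtain ⟨b, h⟩ := hf
  refine ⟨b + |r|, fun x hx => h (x + r) ?_⟩
  have h1 : |x| ≤ |x + r| + |r| := by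
    calc |x| = |(x + r) + (-r)| := by ring_nf
    _ ≤ |x + r| + |(-r)| := abs_add_le _ _
    _ = |x + r| + |r| := by rw [abs_neg]
  linarith

/-- The squaring map of the semidirect product `P = B ⋊ ℚ`, where `ℚ` acts on `B` by
translation: `(f, r)² = (f + r·f, r + r)` with `(r·f) x = f (x + r)`. -/
def Psq (p : BddSupp × ℚ) : BddSupp × ℚ :=
  (⟨fun x => (p.1 : ℚ → ℚ) x + (p.1 : ℚ → ℚ) (x + p.2),
      add_mem p.1.2 (shiftMem p.2 _ p.1.2)⟩,
    p.2 + p.2)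

lemma coe_nsmul_bdd (k : ℕ) (f : BddSupp) (x : ℚ) :
    ((k • f : BddSupp) : ℚ → ℚ) x = k • ((f : ℚ → ℚ) x) := by
  induction k with
  | zero => simp
  | succ n ih =>
    rw [succ_nsmul, succ_nsmul, AddSubgroup.coe_add, Pi.add_apply, ih]

lemma bdd_smul_bij (k : ℕ) (hk : 1 ≤ k) :
    Function.Bijective fun f : BddSupp => k • f := by
  have hk0 : (k : ℚ) ≠ 0 := Nat.cast_ne_zero.mpr (by omega)
  constructor
  · intro f g h
    ext x
    have := congrArg (fun p : BddSupp => (p : ℚ → ℚ) x) h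
    simp only [coe_nsmul_bdd, nsmul_eq_mul] at this
    exact mul_left_cancel₀ hk0 this
  · intro g
    obtain ⟨b, hb⟩ := g.2
    refine ⟨⟨fun x => (g : ℚ → ℚ) x / k, ⟨b, fun x hx => by simp [hb x hx]⟩⟩, ?_⟩
    apply Subtype.ext
    funext x
    simp only [coe_nsmul_bdd, nsmul_eq_mul]
    field_simp

lemma rat_smul_bij (k : ℕ) (hk : 1 ≤ k) :
    Function.Bijective fun r : ℚ => k • r := by
  have hk0 : (k : ℚ) ≠ 0 := Nat.cast_ne_zero.mpr (by omega)
  constructor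
  · intro r s h
    simp only [nsmul_eq_mul] at h
    exact mul_left_cancel₀ hk0 h
  · intro r
    exact ⟨r / k, by simp only [nsmul_eq_mul]; field_simp⟩

/-- The Dirac delta at 0. -/
def delta0 : BddSupp :=
  ⟨fun x => if x = 0 then 1 else 0,
    ⟨1, fun x hx => if_neg (fun h => by rw [h, abs_zero] at hx; linarith)⟩⟩

theorem stmt15 :
    (∀ k : ℕ, 1 ≤ k → Function.Bijective fun f : BddSupp => k • f) ∧
    (∀ k : ℕ, 1 ≤ k → Function.Bijective fun r : ℚ => k • r) ∧
    ¬ Function.Bijective Psq := by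
  refine ⟨bdd_smul_bij, rat_smul_bij, ?_⟩
  rintro ⟨-, hsurj⟩
  obtain ⟨⟨f, r⟩, hfr⟩ := hsurj (delta0, 2)
  have hr : r = 1 := by
    have := congrArg Prod.snd hfr
    simp only [Psq] at this
    linarith
  subst hr
  have hf : ∀ x : ℚ, (f : ℚ → ℚ) x + (f : ℚ → ℚ) (x + 1)
      = if x = 0 then 1 else 0 := by
    intro x
    have := congrArg (fun p : BddSupp × ℚ => (p.1 : ℚ → ℚ) x) hfr
    simpa [Psq, delta0] using this
  obtain ⟨b, hb⟩ := f.2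
  -- forward: f(1+n) = (-1)^n f(1)
  have hpos : ∀ n : ℕ, (f : ℚ → ℚ) (1 + n) = (-1 : ℚ)^n * (f : ℚ → ℚ) 1 := by
    intro n
    induction n with
    | zero => simp
    | succ m ih =>
      have h := hf (1 + m)
      rw [if_neg (by positivity)] at h
      have : (f : ℚ → ℚ) (1 + (m + 1) : ℚ) = -(f : ℚ → ℚ) (1 + m) := by
        have e : (1 + (m : ℚ)) + 1 = 1 + ((m : ℚ) + 1) := by ring
        rw [e] at h; linarith
      rw [Nat.cast_add, Nat.cast_one, this, ih]
      ring
  have hneg : ∀ n : ℕ, (f : ℚ → ℚ) 0 = (-1 : ℚ)^n * (f : ℚ → ℚ) (-(n : ℚ)) := by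
    intro n
    induction n with
    | zero => simp
    | succ m ih =>
      have h := hf (-(m : ℚ) - 1)
      rw [if_neg (by intro e; have : (m : ℚ) = -1 := by linarith
                     have : (0:ℚ) ≤ (m:ℚ) := Nat.cast_nonneg m
                     linarith)] at h
      have e : (-(m : ℚ) - 1) + 1 = -(m : ℚ) := by ring
      rw [e] at h
      have : (f : ℚ → ℚ) (-(m : ℚ)) = -(f : ℚ → ℚ) (-((m : ℚ) + 1)) := by
        have e2 : (-(m : ℚ) - 1) = -((m : ℚ) + 1) := by ring
        rw [e2] at h; linarith
      rw [Nat.cast_add, Nat.cast_one, ih, this]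
      ring
  obtain ⟨N, hN⟩ := exists_nat_gt (b + 1)
  have hNb : b < |(1 + (N : ℚ))| := by
    rw [abs_of_pos (by positivity)]; linarith
  have hNb' : b < |(-(N : ℚ))| := by
    rw [abs_neg, abs_of_nonneg (Nat.cast_nonneg N)]; linarith
  have h1 : (f : ℚ → ℚ) 1 = 0 := by
    have h := hpos N
    rw [hb _ hNb] at h
    have hne : ((-1:ℚ))^N ≠ 0 := pow_ne_zero _ (by norm_num)
    exact (mul_eq_zero.mp h.symm).resolve_left hne
  have h0 : (f : ℚ → ℚ) 0 = 0 := by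
    have := hneg N
    rw [hb _ hNb'] at this
    simpa using this
  have := hf 0
  rw [if_pos rfl, h0] at this
  simp [h1] at this
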